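/- Let C ⊆ F₂^{n×L} be a (1,1,1)-TED code (correcting one tail-erasure in one row and one arbitrary deletion in another row, or any sub-pattern thereof). For X ∈ C define D^{↑↓}_i(X) as the set of arrays obtained by deleting any one bit of row i of X and appending an arbitrary bit at the end of that row, and D(X) = ∪_{i=1}^n D^{↑↓}_i(X). Then for all distinct X, Y ∈ C, D(X) ∩ D(Y) = ∅; moreover |D^{↑↓}_i(X)| = 2·r(x_i), where r(x_i) is the number of runs of row i, so |D(X)| ≤ 2·Σ_i r(x_i). -/

import Mathlib

/-- The number of runs (maximal blocks of equal consecutive symbols) of `x ∈ F₂^L`. -/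
def runs {L : ℕ} (x : Fin L → ZMod 2) : ℕ :=
  ((List.ofFn x).destutter (· ≠ ·)).length

/-- `D^{↑↓}_i(X)`: the set of arrays obtained from `X` by deleting any one bit of row
`i` and appending an arbitrary bit at the end of that row (all other rows unchanged). -/
def DudSet (n L : ℕ) (X : Fin n → Fin L → ZMod 2) (i : Fin n) :
    Set (Fin n → Fin L → ZMod 2) :=
  {Z | (∀ i', i' ≠ i → Z i' = X i') ∧
    ∃ (w : List (ZMod 2)) (b : ZMod 2),
      w.Sublist (List.ofFn (X i)) ∧ w.length + 1 = L ∧ List.ofFn (Z i) = w ++ [b]}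

/-- `W` is a possible output of `X` through the `(1,1,1)`-TED channel: at most one
arbitrary single-bit deletion in one row (`a`), together with at most one tail-erasure
(truncation of the last bit) in another (or the same) row (`e`). -/
def IsTEDOutput (n L : ℕ) (X : Fin n → Fin L → ZMod 2)
    (W : Fin n → List (ZMod 2)) : Prop :=
  ∃ a e : Fin n → ℕ, (∑ i, a i) ≤ 1 ∧ (∑ i, e i) ≤ 1 ∧
    ∀ i, (W i).Sublist ((List.ofFn (X i)).take (L - e i)) ∧
      (W i).length = L - e i - a i

/-- `C` is a `(1,1,1)`-TED code: no two distinct codewords admit `(1,1,1)`-TED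
patterns producing identical outputs. -/
def IsTEDCode (n L : ℕ) (C : Set (Fin n → Fin L → ZMod 2)) : Prop :=
  ∀ X ∈ C, ∀ Y ∈ C, ∀ W : Fin n → List (ZMod 2),
    IsTEDOutput n L X W → IsTEDOutput n L Y W → X = Y

open List in
def delFinset (l : List (ZMod 2)) : Finset (List (ZMod 2)) :=
  (l.sublists.filter (fun w => w.length + 1 = l.length)).toFinset

lemma mem_delFinset {l w : List (ZMod 2)} :
    w ∈ delFinset l ↔ w.Sublist l ∧ w.length + 1 = l.length := by
  simp [delFinset, List.mem_sublists]

lemma delFinset_card : ∀ (l : List (ZMod 2)), l ≠ [] →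
    (delFinset l).card = (l.destutter (· ≠ ·)).length := by
  intro l
  induction l with
  | nil => simp
  | cons a t ih =>
    intro _
    cases t with
    | nil =>
      have : delFinset [a] = {[]} := by
        ext w
        simp only [mem_delFinset, Finset.mem_singleton]
        constructor
        · rintro ⟨hs, hl⟩
          simp only [List.length_cons, List.length_nil] at hl
          exact List.length_eq_zero_iff.1 (by omega)
        · rintro rfl; exact ⟨List.nil_sublist _, rfl⟩
      simp [this]
    | cons c t' =>
      have key : delFinset (a :: c :: t') =
          insert (c :: t') ((delFinset (c :: t')).image (a :: ·)) := by
        ext w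
        simp only [mem_delFinset, Finset.mem_insert, Finset.mem_image]
        constructor
        · rintro ⟨hs, hl⟩
          rcases List.sublist_cons_iff.1 hs with h | ⟨r, rfl, hr⟩
          · left
            exact h.eq_of_length (by simp at hl ⊢; omega)
          · right
            exact ⟨r, ⟨hr, by simp at hl ⊢; omega⟩, rfl⟩
        · rintro (rfl | ⟨r, hr, rfl⟩)
          · exact ⟨List.sublist_cons_self _ _, rfl⟩
          · obtain ⟨hr1, hr2⟩ := hr
            exact ⟨hr1.cons₂ a, by simp at hr2 ⊢; omega⟩
      have himg : ((delFinset (c :: t')).image (a :: ·)).card =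
          (delFinset (c :: t')).card :=
        Finset.card_image_of_injective _ (fun x y h => by injection h)
      by_cases hac : a = c
      · subst hac
        have hmem : (a :: t') ∈ (delFinset (a :: t')).image (a :: ·) :=
          Finset.mem_image.2 ⟨t', mem_delFinset.2 ⟨List.sublist_cons_self _ _, rfl⟩, rfl⟩
        rw [key, Finset.insert_eq_self.2 hmem, himg, ih (by simp)]
        rw [List.destutter_cons_cons]
        simp [List.destutter_cons']
      · have hmem : (c :: t') ∉ (delFinset (c :: t')).image (a :: ·) := by
          simp only [Finset.mem_image, not_exists]
          rintro r ⟨-, h⟩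
          injection h with h1 h2
          exact hac h1
        rw [key, Finset.card_insert_of_notMem hmem, himg, ih (by simp)]
        rw [List.destutter_cons_cons]
        simp [List.destutter_cons', hac, Nat.add_comm]

def tailFinset (l : List (ZMod 2)) : Finset (List (ZMod 2)) :=
  ((delFinset l) ×ˢ (Finset.univ : Finset (ZMod 2))).image (fun p => p.1 ++ [p.2])

lemma mem_tailFinset {l v : List (ZMod 2)} :
    v ∈ tailFinset l ↔ ∃ w b, w.Sublist l ∧ w.length + 1 = l.length ∧ v = w ++ [b] := by
  simp only [tailFinset, Finset.mem_image, Finset.mem_product, Finset.mem_univ, and_true,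
    Prod.exists, mem_delFinset]
  constructor
  · rintro ⟨w, b, ⟨h1, h2⟩, rfl⟩; exact ⟨w, b, h1, h2, rfl⟩
  · rintro ⟨w, b, h1, h2, rfl⟩; exact ⟨w, b, ⟨h1, h2⟩, rfl⟩

lemma tailFinset_card (l : List (ZMod 2)) (hl : l ≠ []) :
    (tailFinset l).card = 2 * (l.destutter (· ≠ ·)).length := by
  rw [tailFinset, Finset.card_image_of_injOn, Finset.card_product, delFinset_card l hl]
  · simp [mul_comm, ZMod.card]
  · rintro ⟨w, b⟩ hw ⟨w', b'⟩ hw' h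
    have hw1 := mem_delFinset.1 (Finset.mem_product.1 hw).1
    have hw2 := mem_delFinset.1 (Finset.mem_product.1 hw').1
    dsimp only at hw1 hw2
    change w ++ [b] = w' ++ [b'] at h
    have hlen : w.length = w'.length := by omega
    obtain ⟨rfl, h2⟩ := List.append_inj h hlen
    simp_all

lemma dud_card (n L : ℕ) (hL : 1 ≤ L) (X : Fin n → Fin L → ZMod 2) (i : Fin n) :
    Nat.card (DudSet n L X i) = 2 * runs (X i) := by
  classical
  have hinj : Set.InjOn (fun Z => List.ofFn (Z i)) (DudSet n L X i) := by
    rintro Z hZ Z' hZ' h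
    funext i'
    by_cases hii : i' = i
    · subst hii; exact List.ofFn_injective h
    · rw [hZ.1 i' hii, (hZ'.1 i' hii)]
  have himg : (fun Z => List.ofFn (Z i)) '' (DudSet n L X i)
      = ↑(tailFinset (List.ofFn (X i))) := by
    ext v
    simp only [Set.mem_image, Finset.coe_sort_coe, Finset.mem_coe, mem_tailFinset]
    constructor
    · rintro ⟨Z, ⟨-, w, b, hs, hlen, hz⟩, rfl⟩
      exact ⟨w, b, hs, by simpa using hlen, hz⟩
    · rintro ⟨w, b, hs, hlen, rfl⟩
      have hv : (w ++ [b]).length = L := by simp at hlen ⊢; omega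
      refine ⟨Function.update X i (fun j => (w ++ [b]).getD j 0), ⟨?_, w, b, hs, ?_, ?_⟩, ?_⟩
      · intro i' hii; rw [Function.update_of_ne hii]
      · simp at hlen; omega
      all_goals
        rw [Function.update_self]
        apply List.ext_getElem (by simp [hv])
        intro k h1 h2
        simp only [List.getElem_ofFn]
        rw [List.getD_eq_getElem]
  have hne : (List.ofFn (X i)) ≠ [] := by
    intro h
    have := congrArg List.length h
    simp at this
    omega
  rw [Nat.card_coe_set_eq, ← Set.ncard_image_of_injOn hinj, himg,
    Set.ncard_coe_finset, tailFinset_card _ hne, runs]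

lemma ncard_biUnion_le {α ι : Type*} [DecidableEq ι] (t : Finset ι) (s : ι → Set α) :
    (⋃ i ∈ t, s i).ncard ≤ ∑ i ∈ t, (s i).ncard := by
  induction t using Finset.induction with
  | empty => simp
  | insert _ _ h ih =>
    rw [Finset.sum_insert h, Finset.set_biUnion_insert]
    exact le_trans (Set.ncard_union_le _ _) (add_le_add_right ih _)

lemma ted_of_dud (n L : ℕ) (hL : 2 ≤ L) (X Z : Fin n → Fin L → ZMod 2) (i₁ i₂ : Fin n)
    (h1 : ∀ i', i' ≠ i₁ → Z i' = X i') (w₁ : List (ZMod 2)) (b₁ : ZMod 2)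
    (hs₁ : w₁.Sublist (List.ofFn (X i₁))) (hl₁ : w₁.length + 1 = L)
    (hz₁ : List.ofFn (Z i₁) = w₁ ++ [b₁]) :
    IsTEDOutput n L X (fun i => if i = i₁ ∨ i = i₂ then (List.ofFn (Z i)).take (L-1)
      else List.ofFn (Z i)) := by
  classical
  refine ⟨fun i => if i = i₁ then 1 else 0, fun i => if i = i₂ ∧ i₂ ≠ i₁ then 1 else 0,
    ?_, ?_, ?_⟩
  · simp
  · by_cases h : i₂ = i₁ <;> simp [h]
  · intro i
    dsimp only
    by_cases hi1 : i = i₁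
    · subst hi1
      have htake : (List.ofFn (Z i)).take (L-1) = w₁ := by
        rw [hz₁]
        exact List.take_left' (by omega)
      have he0 : (if i = i₂ ∧ i₂ ≠ i then (1:ℕ) else 0) = 0 := by
        rw [if_neg]; rintro ⟨rfl, h⟩; exact h rfl
      rw [if_pos (show i = i ∨ i = i₂ from Or.inl rfl), htake, he0,
        if_pos (show i = i from rfl)]
      refine ⟨?_, by omega⟩
      rw [Nat.sub_zero, List.take_of_length_le (by simp)]
      exact hs₁
    · by_cases hi2 : i = i₂
      · subst hi2
        have he1 : (if i = i ∧ i ≠ i₁ then (1:ℕ) else 0) = 1 := if_pos ⟨rfl, hi1⟩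
        rw [if_pos (show i = i₁ ∨ i = i from Or.inr rfl), he1, if_neg hi1, h1 i hi1]
        refine ⟨List.Sublist.refl _, ?_⟩
        rw [List.length_take, List.length_ofFn]
        omega
      · have he0 : (if i = i₂ ∧ i₂ ≠ i₁ then (1:ℕ) else 0) = 0 := by
          rw [if_neg]; rintro ⟨rfl, h⟩; exact hi2 rfl
        rw [if_neg (show ¬ (i = i₁ ∨ i = i₂) by tauto), he0, if_neg hi1, h1 i hi1]
        refine ⟨?_, by simp⟩
        rw [Nat.sub_zero, List.take_of_length_le (by simp)]

/-- for a `(1,1,1)`-TED code, the sets `D(X) = ⋃_i D^{↑↓}_i(X)` are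
pairwise disjoint over codewords; moreover `|D^{↑↓}_i(X)| = 2·r(x_i)` (twice the
number of runs of row `i`), so `|D(X)| ≤ 2·Σ_i r(x_i)`. -/
theorem stmt_19 (n L : ℕ) (hn : 0 < n) (hL : 2 ≤ L)
    (C : Set (Fin n → Fin L → ZMod 2)) (hC : IsTEDCode n L C) :
    (∀ X ∈ C, ∀ Y ∈ C, X ≠ Y →
      (⋃ i, DudSet n L X i) ∩ (⋃ i, DudSet n L Y i) = ∅) ∧
    (∀ (X : Fin n → Fin L → ZMod 2) (i : Fin n),
      Nat.card (DudSet n L X i) = 2 * runs (X i)) ∧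
    (∀ X : Fin n → Fin L → ZMod 2,
      Nat.card (⋃ i, DudSet n L X i) ≤ 2 * ∑ i, runs (X i)) := by
  classical
  refine ⟨?_, fun X i => dud_card n L (by omega) X i, ?_⟩
  · intro X hX Y hY hXY
    rw [Set.eq_empty_iff_forall_notMem]
    rintro Z ⟨hZX, hZY⟩
    rw [Set.mem_iUnion] at hZX hZY
    obtain ⟨i₁, h1, w₁, b₁, hs₁, hl₁, hz₁⟩ := hZX
    obtain ⟨i₂, h2, w₂, b₂, hs₂, hl₂, hz₂⟩ := hZY
    apply hXY
    refine hC X hX Y hY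
      (fun i => if i = i₁ ∨ i = i₂ then (List.ofFn (Z i)).take (L-1) else List.ofFn (Z i))
      (ted_of_dud n L hL X Z i₁ i₂ h1 w₁ b₁ hs₁ hl₁ hz₁) ?_
    have h := ted_of_dud n L hL Y Z i₂ i₁ h2 w₂ b₂ hs₂ hl₂ hz₂
    have hfe : (fun i => if i = i₂ ∨ i = i₁ then (List.ofFn (Z i)).take (L-1)
        else List.ofFn (Z i))
        = (fun i => if i = i₁ ∨ i = i₂ then (List.ofFn (Z i)).take (L-1)
        else List.ofFn (Z i)) := by
      funext i; by_cases h : i = i₁ <;> by_cases h' : i = i₂ <;> simp [h, h']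
    rwa [hfe] at h
  · intro X
    rw [Nat.card_coe_set_eq]
    calc (⋃ i, DudSet n L X i).ncard = (⋃ i ∈ Finset.univ, DudSet n L X i).ncard := by
          simp
      _ ≤ ∑ i, (DudSet n L X i).ncard := ncard_biUnion_le _ _
      _ = ∑ i, 2 * runs (X i) := by
          refine Finset.sum_congr rfl fun i _ => ?_
          rw [← Nat.card_coe_set_eq, dud_card n L (by omega) X i]
      _ = 2 * ∑ i, runs (X i) := (Finset.mul_sum _ _ _).symm
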